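/- Let ξ ∈ Z₂ and let v ∈ F⁴ satisfy H(v) = 2ξ·Q(v)^{(q+1)/2} and H(v) ≠ 0. Then there are exactly two one-dimensional F-subspaces of F⁴ that are spanned by a Σ-vector r with Q(r) = 0 and h(v, r) = 0. (Every point of a surface in the family S̃² lies on precisely two extended tangent planes of the subquadric Q₀.) -/

import Mathlib

/-- `Q(α,β,γ,δ) = αδ - βγ`, the quadratic form of the hyperbolic quadric. -/
def Qf {F : Type*} [Field F] (v : Fin 4 → F) : F := v 0 * v 3 - v 1 * v 2

/-- `H(α,β,γ,δ) = α^{q+1} - β^{q+1} - γ^{q+1} + δ^{q+1}`, the Hermitian form. -/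
def Hf (q : ℕ) {F : Type*} [Field F] (v : Fin 4 → F) : F :=
  v 0 ^ (q + 1) - v 1 ^ (q + 1) - v 2 ^ (q + 1) + v 3 ^ (q + 1)

/-- `v = (α,β,γ,δ)` is nonsingular if `(αz + δ^q z^q)x + (γz + β^q z^q)x^q ≠ 0`
for all nonzero `x, z`. -/
def Nonsingular (q : ℕ) {F : Type*} [Field F] (v : Fin 4 → F) : Prop :=
  ∀ x z : F, x ≠ 0 → z ≠ 0 →
    (v 0 * z + v 3 ^ q * z ^ q) * x + (v 2 * z + v 1 ^ q * z ^ q) * x ^ q ≠ 0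

/-- `Δ(v) = H(v)² - 4·Q(v)^{q+1}`. -/
def Deltaf (q : ℕ) {F : Type*} [Field F] (v : Fin 4 → F) : F :=
  Hf q v ^ 2 - 4 * Qf v ^ (q + 1)

/-- A Σ-vector: a nonzero vector of the form `(α, β, β^q, α^q)`. -/
def IsSigmaVec (q : ℕ) {F : Type*} [Field F] (v : Fin 4 → F) : Prop :=
  v ≠ 0 ∧ ∃ α β : F, v = ![α, β, β ^ q, α ^ q]

/-- The sesquilinear form `h(u,v) = u₁v₁^q - u₂v₂^q - u₃v₃^q + u₄v₄^q`. -/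
def hForm (q : ℕ) {F : Type*} [Field F] (u v : Fin 4 → F) : F :=
  u 0 * v 0 ^ q - u 1 * v 1 ^ q - u 2 * v 2 ^ q + u 3 * v 3 ^ q

/-- The one-dimensional `F`-subspace (as a set) spanned by `v`. -/
def Fline {F : Type*} [Field F] (v : Fin 4 → F) : Set (Fin 4 → F) :=
  {x | ∃ a : F, x = a • v}

/-- The number of one-dimensional `𝔽_q`-subspaces `⟨(s,t)⟩` of `𝔽_q²` with
`Q(s·u + t·w) = 0`. -/
noncomputable def tangentCount (q : ℕ) {F : Type*} [Field F] (u w : Fin 4 → F) : ℕ :=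
  Set.ncard {L : Set (F × F) | ∃ s t : F, s ^ q = s ∧ t ^ q = t ∧ (s, t) ≠ (0, 0) ∧
    Qf (fun i => s * u i + t * w i) = 0 ∧
    L = {p : F × F | ∃ e : F, e ^ q = e ∧ p = (e * s, e * t)}}

/-- `Z₁`: the set of `ξ ∉ {0, 1, -1}` such that `1 - ξ⁻²` is a nonzero square of `𝔽_q`. -/
def Zone (q : ℕ) (F : Type*) [Field F] : Set F :=
  {ξ | ξ ≠ 0 ∧ ξ ≠ 1 ∧ ξ ≠ -1 ∧ ∃ s : F, s ^ q = s ∧ s ≠ 0 ∧ 1 - (ξ ^ 2)⁻¹ = s ^ 2}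

/-- `Z₂`: the set of `ξ ≠ 0` such that `1 - ξ⁻²` is a nonzero nonsquare of `𝔽_q`. -/
def Ztwo (q : ℕ) (F : Type*) [Field F] : Set F :=
  {ξ | ξ ≠ 0 ∧ (1 - (ξ ^ 2)⁻¹) ^ q = 1 - (ξ ^ 2)⁻¹ ∧ 1 - (ξ ^ 2)⁻¹ ≠ 0 ∧
    ¬∃ s : F, s ^ q = s ∧ 1 - (ξ ^ 2)⁻¹ = s ^ 2}

section Helpers

variable {F : Type*} [Field F]

lemma fline_smul {e : F} (he : e ≠ 0) (w : Fin 4 → F) :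
    Fline (e • w) = Fline w := by
  ext x
  simp only [Fline, Set.mem_setOf_eq]
  constructor
  · rintro ⟨a, rfl⟩; exact ⟨a * e, by rw [mul_smul]⟩
  · rintro ⟨a, rfl⟩
    exact ⟨a * e⁻¹, by rw [smul_smul, mul_assoc, inv_mul_cancel₀ he, mul_one]⟩

lemma kernel_exists [Fintype F] (q : ℕ) (hq2 : 2 ≤ q)
    (hcard : Fintype.card F = q ^ 2)
    (hadd : ∀ x y : F, (x + y) ^ q = x ^ q + y ^ q)
    (hsub : ∀ x y : F, (x - y) ^ q = x ^ q - y ^ q)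
    (hqq : ∀ x : F, (x ^ q) ^ q = x)
    {a b : F} (ha : a ≠ 0) (hb : b ≠ 0) (hab : a * a ^ q = b * b ^ q) :
    ∃ α : F, α ≠ 0 ∧ a * α + b * α ^ q = 0 := by
  classical
  by_contra hcon
  push_neg at hcon
  have hinj : Function.Injective (fun x : F => a * x + b * x ^ q) := by
    intro x y hxy
    by_contra hne
    have hz : x - y ≠ 0 := sub_ne_zero.mpr hne
    refine hcon (x - y) hz ?_
    simp only at hxy
    rw [hsub]
    linear_combination hxy
  have hsurj := Finite.injective_iff_surjective.mp hinj
  have key : ∀ y : F, a ^ q * y = b * y ^ q := by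
    intro y
    obtain ⟨x, rfl⟩ := hsurj y
    simp only
    rw [hadd, mul_pow, mul_pow, hqq]
    linear_combination x * hab
  have hba : a ^ q = b := by simpa using key 1
  have hfix : ∀ y : F, y ^ q = y := by
    intro y
    have h := key y
    rw [hba] at h
    exact (mul_left_cancel₀ hb h).symm
  obtain ⟨g, hg⟩ := IsCyclic.exists_generator (α := Fˣ)
  have hord : orderOf g = Nat.card Fˣ := orderOf_eq_card_of_forall_mem_zpowers hg
  have hgq : (g : F) ^ q = g := hfix g
  have hg1 : g ^ (q - 1) = (1 : Fˣ) := by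
    ext
    push_cast
    have : (g : F) ^ (q - 1) * g = 1 * g := by
      rw [one_mul, ← pow_succ]
      have : q - 1 + 1 = q := by omega
      rw [this, hgq]
    exact mul_right_cancel₀ g.ne_zero this
  have hdvd := orderOf_dvd_of_pow_eq_one hg1
  rw [hord, Nat.card_eq_fintype_card, Fintype.card_units, hcard] at hdvd
  have hle := Nat.le_of_dvd (by omega) hdvd
  have hqq2 : q * q ≥ 2 * q := Nat.mul_le_mul_right _ hq2
  have : q ^ 2 = q * q := sq q
  omega

lemma sqrt_exists [Fintype F] (q : ℕ) (hq2 : 2 ≤ q) (hodd : Odd q)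
    (hcard : Fintype.card F = q ^ 2) (hchar : ringChar F ≠ 2)
    {x : F} (hx : x ^ q = x) : ∃ d : F, d ^ 2 = x := by
  rcases eq_or_ne x 0 with rfl | hx0
  · exact ⟨0, by simp⟩
  have h1 : x ^ (q - 1) = 1 := by
    have h : x ^ (q - 1) * x = 1 * x := by
      rw [one_mul, ← pow_succ]
      have : q - 1 + 1 = q := by omega
      rw [this, hx]
    exact mul_right_cancel₀ hx0 h
  have hpow : x ^ (Fintype.card F / 2) = 1 := by
    obtain ⟨m, rfl⟩ := hodd
    have e1 : (2 * m + 1) ^ 2 = 4 * (m * m) + 4 * m + 1 := by ring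
    have e2 : (2 * m + 1) ^ 2 / 2 = (2 * m + 1 - 1) * ((2 * m + 1 + 1) / 2) := by
      have e0 : 2 * m + 1 - 1 = 2 * m := by omega
      have e3 : (2 * m + 1 + 1) / 2 = m + 1 := by omega
      rw [e0, e3, e1]
      have e4 : 2 * m * (m + 1) = 2 * (m * m) + 2 * m := by ring
      rw [e4]
      generalize m * m = M
      omega
    rw [hcard, e2, pow_mul, h1, one_pow]
  obtain ⟨r, hr⟩ := (FiniteField.isSquare_iff hchar hx0).mpr hpow
  exact ⟨r, by rw [sq]; exact hr.symm⟩

end Helpers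

/-- Every point of a surface `S̃_ξ`, `ξ ∈ Z₂`, lies on exactly two extended tangent
planes of the subquadric `Q₀`. -/


theorem stmt19 (q : ℕ) (hq : ∃ p k : ℕ, p.Prime ∧ 0 < k ∧ q = p ^ k) (hodd : Odd q)
    (F : Type*) [Field F] [Fintype F] (hF : Fintype.card F = q ^ 2)
    (ξ : F) (hξ : ξ ∈ Ztwo q F)
    (v : Fin 4 → F)
    (hS : Hf q v = 2 * ξ * Qf v ^ ((q + 1) / 2)) (hH : Hf q v ≠ 0) :
    Set.ncard {L : Set (Fin 4 → F) | ∃ r : Fin 4 → F, IsSigmaVec q r ∧ Qf r = 0 ∧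
      hForm q v r = 0 ∧ L = Fline r} = 2 := by
  obtain ⟨p, k, hp, hk, hqe⟩ := hq
  haveI hfp : Fact p.Prime := ⟨hp⟩
  -- q ≥ 3
  have hq2 : 2 ≤ q := by
    have h2p : 2 ≤ p := hp.two_le
    calc 2 = 2 ^ 1 := rfl
    _ ≤ 2 ^ k := Nat.pow_le_pow_right (by omega) hk
    _ ≤ p ^ k := Nat.pow_le_pow_left h2p k
    _ = q := hqe.symm
  have hq0 : q ≠ 0 := by omega
  -- characteristic facts
  have hcharF := ringChar.charP F
  obtain ⟨n, hpn, hcard⟩ := FiniteField.card F (ringChar F)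
  have hpp : p = ringChar F := by
    have h1 : p ∣ Fintype.card F := by
      rw [hF, hqe, ← pow_mul]
      exact dvd_pow_self p (by omega)
    rw [hcard] at h1
    exact (Nat.prime_dvd_prime_iff_eq hp hpn).mp (hp.dvd_of_dvd_pow h1)
  haveI hcp : CharP F p := by rw [hpp]; exact hcharF
  have hp2 : p ≠ 2 := by
    rintro rfl
    rw [Nat.odd_iff] at hodd
    have : 2 ∣ q := by rw [hqe]; exact dvd_pow_self 2 (by omega)
    omega
  have hrc2 : ringChar F ≠ 2 := by rw [← hpp]; exact hp2
  have h2F : (2 : F) ≠ 0 := by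
    intro h
    have h2 := (CharP.cast_eq_zero_iff F p 2).mp (by exact_mod_cast h)
    exact hp2 ((Nat.prime_dvd_prime_iff_eq hp Nat.prime_two).mp h2)
  -- Frobenius facts
  have hadd : ∀ x y : F, (x + y) ^ q = x ^ q + y ^ q := by
    intro x y; rw [hqe]; exact add_pow_char_pow ..
  have hqq : ∀ x : F, (x ^ q) ^ q = x := by
    intro x
    rw [← pow_mul, ← sq, ← hF]
    exact FiniteField.pow_card x
  have hsub : ∀ x y : F, (x - y) ^ q = x ^ q - y ^ q := by
    intro x y
    have hneg : (-y) ^ q = -(y ^ q) := Odd.neg_pow hodd y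
    rw [sub_eq_add_neg, hadd, hneg, sub_eq_add_neg]
  have h2q : (2 : F) ^ q = 2 := by
    rw [show (2:F) = 1 + 1 by norm_num, hadd, one_pow]
  -- main algebraic quantities
  set H : F := Hf q v with hHdef
  have hHval : H = v 0 * v 0 ^ q - v 1 * v 1 ^ q - v 2 * v 2 ^ q + v 3 * v 3 ^ q := by
    rw [hHdef]; simp only [Hf, pow_succ]; ring
  set Q : F := Qf v with hQdef
  have hQval : Q = v 0 * v 3 - v 1 * v 2 := rfl
  set Qc : F := v 0 ^ q * v 3 ^ q - v 1 ^ q * v 2 ^ q with hQcdef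
  have hQconj : Q ^ q = Qc := by rw [hQval, hQcdef, hsub, mul_pow, mul_pow]
  set C : F := v 3 * v 3 ^ q + v 2 * v 2 ^ q - v 0 * v 0 ^ q - v 1 * v 1 ^ q with hCdef
  set A : F := v 0 * v 1 ^ q - v 2 * v 3 ^ q with hAdef
  set A' : F := v 0 ^ q * v 1 - v 2 ^ q * v 3 with hA'def
  have hAconj : A ^ q = A' := by
    rw [hAdef, hA'def, hsub, mul_pow, mul_pow, hqq, hqq]
  have hHq : H ^ q = H := by
    rw [hHval, hadd, hsub, hsub, mul_pow, mul_pow, mul_pow, mul_pow]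
    simp only [hqq]; ring
  have hCq : C ^ q = C := by
    rw [hCdef, hsub, hsub, hadd, mul_pow, mul_pow, mul_pow, mul_pow]
    simp only [hqq]; ring
  -- facts from ξ ∈ Ztwo
  obtain ⟨hξ0, htfix, ht0, htns⟩ := hξ
  set t : F := 1 - (ξ ^ 2)⁻¹ with htdef
  have hξ2 : ξ ^ 2 ≠ 0 := pow_ne_zero _ hξ0
  have hQ0 : Q ≠ 0 := by
    intro h
    exact hH (by rw [hS, h, zero_pow (by omega), mul_zero])
  have hQpow : Q ^ ((q+1)/2) * Q ^ ((q+1)/2) = Q * Qc := by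
    rw [← pow_add]
    have he : (q+1)/2 + (q+1)/2 = q + 1 := by
      obtain ⟨m, hm⟩ := hodd; omega
    rw [he, pow_succ', hQconj]
  have hHsq : H ^ 2 = 4 * ξ ^ 2 * (Q * Qc) := by
    rw [hS, ← hQpow]; ring
  have hDelta : H ^ 2 - 4 * (Q * Qc) = H ^ 2 * t := by
    rw [htdef]
    field_simp
    linear_combination hHsq
  have hKAI : C ^ 2 - 4 * (A * A') = H ^ 2 - 4 * (Q * Qc) := by
    rw [hCdef, hAdef, hA'def, hHval, hQval, hQcdef]; ring
  -- the square root d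
  have hDfix : (H ^ 2 * t) ^ q = H ^ 2 * t := by
    rw [mul_pow, ← pow_mul, mul_comm 2 q, pow_mul, hHq, htfix]
  obtain ⟨d, hd2⟩ := sqrt_exists q hq2 hodd hF hrc2 hDfix
  have hd0 : d ≠ 0 := by
    intro h
    rw [h] at hd2
    exact (mul_ne_zero (pow_ne_zero 2 hH) ht0) (by linear_combination -hd2)
  have hdq : d ^ q = -d := by
    have h1 : (d ^ q) ^ 2 = d ^ 2 := by
      rw [← pow_mul, mul_comm q 2, pow_mul, hd2, hDfix]
    have h2 : (d ^ q - d) * (d ^ q + d) = 0 := by linear_combination h1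
    rcases mul_eq_zero.mp h2 with h | h
    · exfalso
      have hdd : d ^ q = d := by linear_combination h
      apply htns
      refine ⟨d / H, ?_, ?_⟩
      · rw [div_pow, hdd, hHq]
      · rw [div_pow, eq_div_iff (pow_ne_zero 2 hH)]
        linear_combination -hd2
    · linear_combination h
  have hd2' : d ^ 2 = C ^ 2 - 4 * (A * A') := by
    linear_combination hd2 - hDelta - hKAI
  have hA0 : A ≠ 0 := by
    intro h
    have hA'0 : A' = 0 := by rw [← hAconj, h, zero_pow hq0]
    apply htns
    refine ⟨C / H, ?_, ?_⟩
    · rw [div_pow, hCq, hHq]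
    · rw [div_pow, eq_div_iff (pow_ne_zero 2 hH)]
      linear_combination -hd2 + hd2' - 4 * A * hA'0
  have hA'0 : A' ≠ 0 := by
    intro h
    apply hA0
    rw [← hqq A, hAconj, h, zero_pow hq0]
  have hE0 : (2 : F) * A ≠ 0 := mul_ne_zero h2F hA0
  have hE'0 : (2 : F) * A' ≠ 0 := mul_ne_zero h2F hA'0
  have hndq : (-d : F) ^ q = d := by rw [Odd.neg_pow hodd, hdq, neg_neg]
  set l1 : F := (d - C) / (2 * A) with hl1def
  set l2 : F := (-d - C) / (2 * A) with hl2def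
  have hl1q : l1 ^ q = (-d - C) / (2 * A') := by
    rw [hl1def, div_pow, hsub, hdq, hCq, mul_pow, h2q, hAconj]
  have hl2q : l2 ^ q = (d - C) / (2 * A') := by
    rw [hl2def, div_pow, hsub, hndq, hCq, mul_pow, h2q, hAconj]
  have hl1n : l1 * l1 ^ q = 1 := by
    rw [hl1q, hl1def, div_mul_div_comm, div_eq_one_iff_eq (mul_ne_zero hE0 hE'0)]
    linear_combination -hd2'
  have hl2n : l2 * l2 ^ q = 1 := by
    rw [hl2q, hl2def, div_mul_div_comm, div_eq_one_iff_eq (mul_ne_zero hE0 hE'0)]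
    linear_combination -hd2'
  have h4F : (4 : F) * A ≠ 0 := by
    have : (4 : F) = 2 * 2 := by norm_num
    rw [this, mul_assoc]
    exact mul_ne_zero h2F hE0
  have hda : 2 * A * l1 = d - C := by rw [hl1def]; field_simp
  have hdb : 2 * A * l2 = -d - C := by rw [hl2def]; field_simp
  have hroot1 : A * l1 ^ 2 + C * l1 + A' = 0 := by
    have h4 : 4 * A * (A * l1 ^ 2 + C * l1 + A') = 0 := by
      linear_combination (2 * A * l1 + d + C) * hda + hd2'
    rcases mul_eq_zero.mp h4 with h' | h'
    · exact absurd h' h4F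
    · exact h'
  have hroot2 : A * l2 ^ 2 + C * l2 + A' = 0 := by
    have h4 : 4 * A * (A * l2 ^ 2 + C * l2 + A') = 0 := by
      linear_combination (2 * A * l2 - d + C) * hdb + hd2'
    rcases mul_eq_zero.mp h4 with h' | h'
    · exact absurd h' h4F
    · exact h'
  have hl12 : l1 ≠ l2 := by
    intro h
    rw [hl1def, hl2def, div_eq_div_iff hE0 hE0] at h
    apply hd0
    have h2d : (2 : F) * A * (2 * d) = 0 := by linear_combination h
    rcases mul_eq_zero.mp h2d with h' | h'
    · exact absurd h' hE0
    · rcases mul_eq_zero.mp h' with h'' | h''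
      · exact absurd h'' h2F
      · exact h''
  -- generic facts about l, m with l * m = 1, m ^ q = l
  have hbothzero : ∀ l m : F, l * m = 1 → m ^ q = l →
      v 3 - v 2 * l = 0 → v 0 - v 1 * m = 0 → False := by
    intro l m hlm hmq h3 h0
    apply hH
    have hv3 : v 3 = v 2 * l := by linear_combination h3
    have hv0 : v 0 = v 1 * m := by linear_combination h0
    have hlq : l ^ q = m := by rw [← hmq, hqq]
    rw [hHval, hv3, hv0, mul_pow, mul_pow, hmq, hlq]
    linear_combination (v 1 * v 1 ^ q + v 2 * v 2 ^ q) * hlm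
  have hab_root : ∀ l m : F, l * m = 1 → m ^ q = l →
      ((v 3 - v 2 * l) * (v 3 - v 2 * l) ^ q = (v 0 - v 1 * m) * (v 0 - v 1 * m) ^ q
        ↔ A * l ^ 2 + C * l + A' = 0) := by
    intro l m hlm hmq
    have hlq : l ^ q = m := by rw [← hmq, hqq]
    have hG : (v 3 - v 2 * l) * (v 3 - v 2 * l) ^ q - (v 0 - v 1 * m) * (v 0 - v 1 * m) ^ q
        = C + A * l + A' * m := by
      rw [hsub, hsub, mul_pow, mul_pow, hlq, hmq, hCdef, hAdef, hA'def]
      linear_combination (v 2 * v 2 ^ q - v 1 * v 1 ^ q) * hlm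
    constructor
    · intro h
      have h0 : C + A * l + A' * m = 0 := by rw [← hG]; linear_combination h
      linear_combination l * h0 - A' * hlm
    · intro h
      have h0 : C + A * l + A' * m = 0 := by linear_combination m * h - (A * l + C) * hlm
      linear_combination hG + h0
  have hfac : ∀ l : F, A * l ^ 2 + C * l + A' = 0 → l = l1 ∨ l = l2 := by
    intro l hroot
    have hexp : (2*A*l - d + C) * (2*A*l + d + C) = 0 := by
      linear_combination 4 * A * hroot - hd2'
    rcases mul_eq_zero.mp hexp with h | h
    · left; rw [hl1def, eq_div_iff hE0]; linear_combination h
    · right; rw [hl2def, eq_div_iff hE0]; linear_combination h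
  -- construct the two Σ-vectors
  have hroot1' := (hab_root l1 (l1 ^ q) hl1n (hqq l1)).mpr hroot1
  have hroot2' := (hab_root l2 (l2 ^ q) hl2n (hqq l2)).mpr hroot2
  have ha1 : v 3 - v 2 * l1 ≠ 0 := by
    intro h
    have hb : v 0 - v 1 * l1 ^ q = 0 := by
      rw [h] at hroot1'
      rcases mul_eq_zero.mp (by linear_combination -hroot1' : (v 0 - v 1 * l1 ^ q) * (v 0 - v 1 * l1 ^ q) ^ q = 0) with h' | h'
      · exact h'
      · rw [← hqq (v 0 - v 1 * l1 ^ q), h', zero_pow hq0]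
    exact hbothzero l1 (l1 ^ q) hl1n (hqq l1) h hb
  have hb1 : v 0 - v 1 * l1 ^ q ≠ 0 := by
    intro h
    have ha : v 3 - v 2 * l1 = 0 := by
      rw [h] at hroot1'
      rcases mul_eq_zero.mp (by linear_combination hroot1' : (v 3 - v 2 * l1) * (v 3 - v 2 * l1) ^ q = 0) with h' | h'
      · exact h'
      · rw [← hqq (v 3 - v 2 * l1), h', zero_pow hq0]
    exact hbothzero l1 (l1 ^ q) hl1n (hqq l1) ha h
  have ha2 : v 3 - v 2 * l2 ≠ 0 := by
    intro h
    have hb : v 0 - v 1 * l2 ^ q = 0 := by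
      rw [h] at hroot2'
      rcases mul_eq_zero.mp (by linear_combination -hroot2' : (v 0 - v 1 * l2 ^ q) * (v 0 - v 1 * l2 ^ q) ^ q = 0) with h' | h'
      · exact h'
      · rw [← hqq (v 0 - v 1 * l2 ^ q), h', zero_pow hq0]
    exact hbothzero l2 (l2 ^ q) hl2n (hqq l2) h hb
  have hb2 : v 0 - v 1 * l2 ^ q ≠ 0 := by
    intro h
    have ha : v 3 - v 2 * l2 = 0 := by
      rw [h] at hroot2'
      rcases mul_eq_zero.mp (by linear_combination hroot2' : (v 3 - v 2 * l2) * (v 3 - v 2 * l2) ^ q = 0) with h' | h'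
      · exact h'
      · rw [← hqq (v 3 - v 2 * l2), h', zero_pow hq0]
    exact hbothzero l2 (l2 ^ q) hl2n (hqq l2) ha h
  obtain ⟨α1, hα1, hker1⟩ := kernel_exists q hq2 hF hadd hsub hqq ha1 hb1 hroot1'
  obtain ⟨α2, hα2, hker2⟩ := kernel_exists q hq2 hF hadd hsub hqq ha2 hb2 hroot2'
  set r1 : Fin 4 → F := ![α1, l1 * α1, (l1 * α1) ^ q, α1 ^ q] with hr1def
  set r2 : Fin 4 → F := ![α2, l2 * α2, (l2 * α2) ^ q, α2 ^ q] with hr2def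
  have hr1sig : IsSigmaVec q r1 := by
    refine ⟨?_, α1, l1 * α1, rfl⟩
    intro h
    apply hα1
    simpa [hr1def] using congrFun h 0
  have hr2sig : IsSigmaVec q r2 := by
    refine ⟨?_, α2, l2 * α2, rfl⟩
    intro h
    apply hα2
    simpa [hr2def] using congrFun h 0
  have hr1Q : Qf r1 = 0 := by
    rw [hr1def]
    simp only [Qf, Matrix.cons_val_zero, Matrix.cons_val_one, Matrix.head_cons,
      Matrix.cons_val_two, Matrix.cons_val_three, Matrix.tail_cons]
    rw [mul_pow]
    linear_combination (-(α1 * α1 ^ q)) * hl1n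
  have hr2Q : Qf r2 = 0 := by
    rw [hr2def]
    simp only [Qf, Matrix.cons_val_zero, Matrix.cons_val_one, Matrix.head_cons,
      Matrix.cons_val_two, Matrix.cons_val_three, Matrix.tail_cons]
    rw [mul_pow]
    linear_combination (-(α2 * α2 ^ q)) * hl2n
  have hr1h : hForm q v r1 = 0 := by
    rw [hr1def]
    simp only [hForm, Matrix.cons_val_zero, Matrix.cons_val_one, Matrix.head_cons,
      Matrix.cons_val_two, Matrix.cons_val_three, Matrix.tail_cons]
    rw [hqq, hqq, mul_pow]
    linear_combination hker1
  have hr2h : hForm q v r2 = 0 := by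
    rw [hr2def]
    simp only [hForm, Matrix.cons_val_zero, Matrix.cons_val_one, Matrix.head_cons,
      Matrix.cons_val_two, Matrix.cons_val_three, Matrix.tail_cons]
    rw [hqq, hqq, mul_pow]
    linear_combination hker2
  -- the set equality
  have hset : {L : Set (Fin 4 → F) | ∃ r : Fin 4 → F, IsSigmaVec q r ∧ Qf r = 0 ∧
      hForm q v r = 0 ∧ L = Fline r} = {Fline r1, Fline r2} := by
    ext L
    simp only [Set.mem_setOf_eq, Set.mem_insert_iff, Set.mem_singleton_iff]
    constructor
    · rintro ⟨r, ⟨hr0, α, β, rfl⟩, hQr, hhr, rfl⟩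
      have hQr' : α * α ^ q - β * β ^ q = 0 := by
        simpa [Qf] using hQr
      have hα : α ≠ 0 := by
        intro h
        have hβ0 : β = 0 := by
          rw [h] at hQr'
          rcases mul_eq_zero.mp (by linear_combination -hQr' : β * β ^ q = 0) with h' | h'
          · exact h'
          · rw [← hqq β, h', zero_pow hq0]
        apply hr0
        funext i
        fin_cases i <;> simp [h, hβ0, zero_pow hq0]
      have hβ : β ≠ 0 := by
        intro h
        apply hα
        rw [h] at hQr'
        rcases mul_eq_zero.mp (by linear_combination hQr' : α * α ^ q = 0) with h' | h'
        · exact h'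
        · rw [← hqq α, h', zero_pow hq0]
      have hαq : α * α ^ q ≠ 0 := mul_ne_zero hα (pow_ne_zero q hα)
      set l : F := β * α⁻¹ with hldef
      have hβl : β = l * α := by rw [hldef]; field_simp
      have hβq : β ^ q = l ^ q * α ^ q := by rw [hβl, mul_pow]
      have hlm : l * l ^ q = 1 := by
        apply mul_right_cancel₀ hαq
        rw [one_mul]
        linear_combination -hQr' - β * hβq - (l ^ q * α ^ q) * hβl + (l * l ^ q) * (0:F) + β * (l ^ q * α ^ q) * (0:F)
      have hhr' : v 0 * α ^ q - v 1 * β ^ q - v 2 * β + v 3 * α = 0 := by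
        have h := hhr
        simp only [hForm, Matrix.cons_val_zero, Matrix.cons_val_one, Matrix.head_cons,
          Matrix.cons_val_two, Matrix.cons_val_three, Matrix.tail_cons, hqq] at h
        linear_combination h
      have hker : (v 3 - v 2 * l) * α + (v 0 - v 1 * l ^ q) * α ^ q = 0 := by
        linear_combination hhr' + v 2 * hβl + v 1 * hβq
      have hb0 : v 0 - v 1 * l ^ q ≠ 0 := by
        intro hb
        have ha0' : v 3 - v 2 * l = 0 := by
          rw [hb] at hker
          rcases mul_eq_zero.mp (by linear_combination hker : (v 3 - v 2 * l) * α = 0) with h' | h'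
          · exact h'
          · exact absurd h' hα
        exact hbothzero l (l ^ q) hlm (hqq l) ha0' hb
      have ha0 : v 3 - v 2 * l ≠ 0 := by
        intro ha
        apply hb0
        rw [ha] at hker
        rcases mul_eq_zero.mp (by linear_combination hker : (v 0 - v 1 * l ^ q) * α ^ q = 0) with h' | h'
        · exact h'
        · exact absurd h' (pow_ne_zero q hα)
      have hker2' : (v 3 - v 2 * l) ^ q * α ^ q + (v 0 - v 1 * l ^ q) ^ q * α = 0 := by
        have h := congrArg (fun x : F => x ^ q) hker
        rw [hadd, mul_pow, mul_pow, hqq, zero_pow hq0] at h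
        exact h
      have heq : (v 3 - v 2 * l) * (v 3 - v 2 * l) ^ q
          = (v 0 - v 1 * l ^ q) * (v 0 - v 1 * l ^ q) ^ q := by
        apply mul_right_cancel₀ hαq
        linear_combination ((v 3 - v 2 * l) ^ q * α ^ q) * hker
          - ((v 0 - v 1 * l ^ q) * α ^ q) * hker2'
      have hroot_l := (hab_root l (l ^ q) hlm (hqq l)).mp heq
      have hscal : ∀ αi : F, αi ≠ 0 →
          (v 3 - v 2 * l) * αi + (v 0 - v 1 * l ^ q) * αi ^ q = 0 →
          Fline ![α, β, β ^ q, α ^ q] = Fline ![αi, l * αi, (l * αi) ^ q, αi ^ q] := by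
        intro αi hαi hkeri
        have hcross : (v 0 - v 1 * l ^ q) * (α ^ q * αi) = (v 0 - v 1 * l ^ q) * (αi ^ q * α) := by
          linear_combination αi * hker - α * hkeri
        have hcross' : α ^ q * αi = αi ^ q * α := mul_left_cancel₀ hb0 hcross
        set e : F := α * αi⁻¹ with hedef
        have he0 : e ≠ 0 := mul_ne_zero hα (inv_ne_zero hαi)
        have heα : α = e * αi := by rw [hedef]; field_simp
        have heαq : α ^ q = e * αi ^ q := by
          rw [hedef]
          field_simp
          linear_combination hcross'
        have h2e : β = e * (l * αi) := by rw [hβl, heα]; ring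
        have h3e : β ^ q = e * (l * αi) ^ q := by rw [hβq, heαq, mul_pow]; ring
        have hre : (![α, β, β ^ q, α ^ q] : Fin 4 → F)
            = e • ![αi, l * αi, (l * αi) ^ q, αi ^ q] := by
          rw [h3e, h2e, heαq, heα]
          simp only [Matrix.smul_cons, smul_eq_mul, Matrix.smul_empty]
        rw [hre, fline_smul he0]
      rcases hfac l hroot_l with h | h
      · left
        rw [hr1def]
        have hk : (v 3 - v 2 * l) * α1 + (v 0 - v 1 * l ^ q) * α1 ^ q = 0 := by
          rw [h]; exact hker1
        have := hscal α1 hα1 hk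
        rw [h] at this
        exact this
      · right
        rw [hr2def]
        have hk : (v 3 - v 2 * l) * α2 + (v 0 - v 1 * l ^ q) * α2 ^ q = 0 := by
          rw [h]; exact hker2
        have := hscal α2 hα2 hk
        rw [h] at this
        exact this
    · rintro (rfl | rfl)
      · exact ⟨r1, hr1sig, hr1Q, hr1h, rfl⟩
      · exact ⟨r2, hr2sig, hr2Q, hr2h, rfl⟩
  have hne : Fline r1 ≠ Fline r2 := by
    intro h
    have hmem : r2 ∈ Fline r2 := ⟨1, (one_smul F r2).symm⟩
    rw [← h] at hmem
    obtain ⟨c, hc⟩ := hmem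
    have h0 := congrFun hc 0
    have h1 := congrFun hc 1
    simp only [hr1def, hr2def, Pi.smul_apply, smul_eq_mul, Matrix.cons_val_zero,
      Matrix.cons_val_one, Matrix.head_cons] at h0 h1
    apply hl12
    have hl : l1 * α2 = l2 * α2 := by
      linear_combination l1 * h0 - h1
    exact (mul_right_cancel₀ hα2 hl)
  rw [hset]
  exact Set.ncard_pair hne
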